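/- For all integers n ≥ 1 and m ≥ 2, ∫₀¹ Bₙ(x)·Cₘ(x) dx = −cos(πn/2) · n! · ζ(n+m) / (2π)^n. In particular the integral vanishes for odd n, and for even n it equals (−1)^{n/2+1} · n! · ζ(n+m) / (2π)^n. (This is the other cross case of the paper's orthogonality lemma.) -/

import Mathlib

open Real MeasureTheory

/-- The real Bernoulli polynomial `Bₙ(x)`. -/
noncomputable def bernoulliPoly (n : ℕ) (x : ℝ) : ℝ :=
  Polynomial.aeval x (Polynomial.bernoulli n)

/-- The cosine Clausen-type series `C_m(x) = ∑_{k=1}^∞ cos(2πkx)/k^m`. -/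
noncomputable def clausenC (m : ℕ) (x : ℝ) : ℝ :=
  ∑' k : ℕ+, Real.cos (2 * Real.pi * k * x) / (k : ℝ) ^ m

lemma aux_I_pow (n : ℕ) :
    (Complex.I)^n + (-Complex.I)^n = 2 * (Real.cos (Real.pi * n / 2) : ℂ) := by
  have h1 : (Complex.I : ℂ) = Complex.cos ((Real.pi/2 : ℝ) : ℂ) + Complex.sin ((Real.pi/2 : ℝ) : ℂ) * Complex.I := by
    rw [← Complex.ofReal_cos, ← Complex.ofReal_sin, Real.cos_pi_div_two, Real.sin_pi_div_two]
    simp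
  have h2 : (-Complex.I : ℂ) = Complex.cos ((-(Real.pi/2) : ℝ) : ℂ) + Complex.sin ((-(Real.pi/2) : ℝ) : ℂ) * Complex.I := by
    rw [Complex.ofReal_neg, Complex.cos_neg, Complex.sin_neg, ← Complex.ofReal_cos, ← Complex.ofReal_sin,
      Real.cos_pi_div_two, Real.sin_pi_div_two]
    simp
  have hA : (Complex.I)^n = Complex.cos ((n:ℂ) * ((Real.pi/2 : ℝ) : ℂ)) + Complex.sin ((n:ℂ) * ((Real.pi/2 : ℝ) : ℂ)) * Complex.I := by
    conv_lhs => rw [h1]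
    exact Complex.cos_add_sin_mul_I_pow n _
  have hB : (-Complex.I)^n = Complex.cos ((n:ℂ) * ((Real.pi/2 : ℝ) : ℂ)) - Complex.sin ((n:ℂ) * ((Real.pi/2 : ℝ) : ℂ)) * Complex.I := by
    conv_lhs => rw [h2]
    rw [Complex.cos_add_sin_mul_I_pow n]
    have : ((n : ℂ) * ((-(Real.pi/2) : ℝ) : ℂ)) = -((n : ℂ) * ((Real.pi/2 : ℝ) : ℂ)) := by push_cast; ring
    rw [this, Complex.cos_neg, Complex.sin_neg]; ring
  rw [hA, hB]
  have : Complex.cos ((n : ℂ) * ((Real.pi/2 : ℝ) : ℂ)) = (Real.cos (Real.pi * n / 2) : ℂ) := by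
    rw [show ((n : ℂ) * ((Real.pi/2 : ℝ) : ℂ)) = ((Real.pi * n / 2 : ℝ) : ℂ) by push_cast; ring,
      ← Complex.ofReal_cos]
  rw [this]; ring

lemma integral_bernoulli_mul_cos (n : ℕ) (hn : n ≠ 0) (k : ℕ+) :
    ∫ x in (0:ℝ)..1, bernoulliFun n x * Real.cos (2*Real.pi*k*x)
      = -(n.factorial : ℝ) * Real.cos (Real.pi*n/2) / (2*Real.pi*k)^n := by
  have hint : ∀ j : ℤ, bernoulliFourierCoeff n j
      = ∫ x in (0:ℝ)..1, Complex.exp (2*Real.pi*Complex.I*(-j)*x) * (bernoulliFun n x : ℂ) := by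
    intro j
    rw [bernoulliFourierCoeff, fourierCoeffOn_eq_integral]
    simp only [sub_zero, one_div, div_one, one_smul, smul_eq_mul, fourier_coe_apply]
    norm_num
  have hI : ∀ j : ℤ, IntervalIntegrable
      (fun x : ℝ => Complex.exp (2*Real.pi*Complex.I*(-j)*x) * (bernoulliFun n x : ℂ)) volume 0 1 := by
    intro j
    apply Continuous.intervalIntegrable
    exact (Complex.continuous_exp.comp (by fun_prop)).mul
      (Complex.continuous_ofReal.comp (Polynomial.continuous _))
  have hsum : bernoulliFourierCoeff n (k:ℤ) + bernoulliFourierCoeff n (-(k:ℤ))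
      = (((2:ℝ) * ∫ x in (0:ℝ)..1, bernoulliFun n x * Real.cos (2*Real.pi*k*x) : ℝ) : ℂ) := by
    rw [hint, hint, ← intervalIntegral.integral_add (hI _) (hI _),
      ← intervalIntegral.integral_const_mul, ← intervalIntegral.integral_ofReal]
    apply intervalIntegral.integral_congr
    intro x _
    push_cast
    simp only [neg_neg]
    rw [show (2*(Real.pi:ℂ)*Complex.I*(-((k:ℕ):ℂ))*(x:ℂ)) = (-(2*(Real.pi:ℂ)*(k:ℕ)*(x:ℂ)))*Complex.I by ring,
      show (2*(Real.pi:ℂ)*Complex.I*(((k:ℕ):ℂ))*(x:ℂ)) = ((2*(Real.pi:ℂ)*(k:ℕ)*(x:ℂ)))*Complex.I by ring,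
      Complex.exp_mul_I, Complex.exp_mul_I, Complex.cos_neg, Complex.sin_neg]
    ring
  rw [bernoulliFourierCoeff_eq hn (k:ℤ), bernoulliFourierCoeff_eq hn (-(k:ℤ))] at hsum
  push_cast at hsum
  apply Complex.ofReal_injective
  have hk0 : ((k:ℕ):ℂ) ≠ 0 := by exact_mod_cast k.ne_zero
  have hπ : (Real.pi:ℂ) ≠ 0 := by exact_mod_cast Real.pi_ne_zero
  have ha : ((2:ℂ)*Real.pi*(k:ℕ))^n ≠ 0 :=
    pow_ne_zero _ (by simp [hk0, hπ])
  have hIn : (Complex.I)^n ≠ 0 := pow_ne_zero _ Complex.I_ne_zero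
  have hprod : (Complex.I)^n * (-Complex.I)^n = 1 := by
    rw [← mul_pow]; simp
  have inv1 : ((Complex.I)^n)⁻¹ = (-Complex.I)^n := inv_eq_of_mul_eq_one_right hprod
  have hprod2 : (-Complex.I)^n * (Complex.I)^n = 1 := by rw [mul_comm]; exact hprod
  have inv2 : ((-Complex.I)^n)⁻¹ = (Complex.I)^n := inv_eq_of_mul_eq_one_right hprod2
  have h1 : (2*(Real.pi:ℂ)*Complex.I*((k:ℕ):ℂ))^n = ((2:ℂ)*Real.pi*(k:ℕ))^n * (Complex.I)^n := by
    rw [← mul_pow]; ring_nf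
  have h2 : (2*(Real.pi:ℂ)*Complex.I*(-((k:ℕ):ℂ)))^n = ((2:ℂ)*Real.pi*(k:ℕ))^n * (-Complex.I)^n := by
    rw [← mul_pow]; ring_nf
  rw [h1, h2] at hsum
  have e1 : -(n.factorial:ℂ)/(((2:ℂ)*Real.pi*(k:ℕ))^n * (Complex.I)^n)
      = -(n.factorial:ℂ) * (-Complex.I)^n / ((2:ℂ)*Real.pi*(k:ℕ))^n := by
    rw [div_mul_eq_div_div, div_eq_mul_inv (-(n.factorial:ℂ)/_), inv1]; ring
  have e2 : -(n.factorial:ℂ)/(((2:ℂ)*Real.pi*(k:ℕ))^n * (-Complex.I)^n)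
      = -(n.factorial:ℂ) * (Complex.I)^n / ((2:ℂ)*Real.pi*(k:ℕ))^n := by
    rw [div_mul_eq_div_div, div_eq_mul_inv (-(n.factorial:ℂ)/_), inv2]; ring
  rw [e1, e2] at hsum
  have haux := aux_I_pow n
  push_cast at haux ⊢
  linear_combination -hsum / 2 - ((n.factorial:ℂ) / ((2:ℂ)*Real.pi*(k:ℕ))^n / 2) * haux

/-- Cross case of the orthogonality lemma: for `n ≥ 1`, `m ≥ 2`,
`∫₀¹ Bₙ(x)·Cₘ(x) dx = −cos(πn/2)·n!·ζ(n+m)/(2π)^n`. -/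
theorem bernoulli_clausenC_cross (n m : ℕ) (hn : 1 ≤ n) (hm : 2 ≤ m) :
    ((∫ x in (0:ℝ)..1, bernoulliPoly n x * clausenC m x : ℝ) : ℂ) =
      -(Real.cos (Real.pi * n / 2) : ℂ) * (n.factorial : ℂ) *
        riemannZeta (n + m) / (2 * Real.pi : ℂ) ^ n := by
  have hn0 : n ≠ 0 := by omega
  have hBP : ∀ x : ℝ, bernoulliPoly n x = bernoulliFun n x := by
    intro x
    simp [bernoulliPoly, bernoulliFun, Polynomial.aeval_def, Polynomial.eval_map]
  have hc : ∀ k : ℕ+, Continuous fun x : ℝ => bernoulliFun n x * Real.cos (2*Real.pi*k*x) / (k:ℝ)^m := by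
    intro k
    exact ((Polynomial.continuous _).mul (by fun_prop)).div_const _
  set F : ℕ+ → C(ℝ, ℝ) := fun k =>
    ⟨fun x => bernoulliFun n x * Real.cos (2*Real.pi*k*x) / (k:ℝ)^m, hc k⟩ with hF
  set K : TopologicalSpace.Compacts ℝ := ⟨Set.uIcc 0 1, isCompact_uIcc⟩ with hK
  set B : C(ℝ, ℝ) := ⟨bernoulliFun n, Polynomial.continuous _⟩ with hBdef
  set C : ℝ := ‖B.restrict K‖ with hCdef
  have hmaj : Summable (fun k : ℕ+ => C * (1/((k:ℕ):ℝ)^m)) := by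
    apply Summable.mul_left
    exact (summable_one_div_nat_pow.mpr (by omega)).comp_injective PNat.coe_injective
  have hbound : ∀ k : ℕ+, ‖(F k).restrict K‖ ≤ C * (1/((k:ℕ):ℝ)^m) := by
    intro k
    have hkpos : (0:ℝ) < ((k:ℕ):ℝ)^m := by positivity
    refine (ContinuousMap.norm_le _ (by positivity)).mpr ?_
    intro x
    simp only [ContinuousMap.restrict_apply, hF, ContinuousMap.coe_mk]
    have hb : |bernoulliFun n (x:ℝ)| ≤ C := by
      have := (B.restrict K).norm_coe_le_norm x
      exact this
    have hcos : |Real.cos (2*Real.pi*k*(x:ℝ))| ≤ 1 := Real.abs_cos_le_one _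
    rw [Real.norm_eq_abs, abs_div, abs_mul, abs_of_pos hkpos]
    calc |bernoulliFun n (x:ℝ)| * |Real.cos (2*Real.pi*k*(x:ℝ))| / ((k:ℕ):ℝ)^m
        ≤ C * 1 / ((k:ℕ):ℝ)^m :=
          (div_le_div_iff_of_pos_right hkpos).mpr (mul_le_mul hb hcos (abs_nonneg _)
            ((abs_nonneg _).trans hb))
      _ = C * (1/((k:ℕ):ℝ)^m) := by ring
  have hnorms : Summable fun k : ℕ+ => ‖(F k).restrict K‖ :=
    Summable.of_nonneg_of_le (fun _ => norm_nonneg _) hbound hmaj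
  have hswap := intervalIntegral.tsum_intervalIntegral_eq_of_summable_norm
    (a := (0:ℝ)) (b := 1) (f := F) hnorms
  have hpt : ∀ x : ℝ, ∑' k : ℕ+, F k x = bernoulliPoly n x * clausenC m x := by
    intro x
    rw [hBP, clausenC, ← tsum_mul_left]
    apply tsum_congr
    intro k
    simp [hF, mul_div_assoc]
  have hval : ∀ k : ℕ+, (∫ x in (0:ℝ)..1, F k x)
      = (-(n.factorial : ℝ) * Real.cos (Real.pi*n/2) / (2*Real.pi)^n) * (1/((k:ℕ):ℝ)^(n+m)) := by
    intro k
    simp only [hF, ContinuousMap.coe_mk]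
    rw [intervalIntegral.integral_div, integral_bernoulli_mul_cos n hn0 k]
    have hk0 : ((k:ℕ):ℝ) ≠ 0 := by exact_mod_cast k.ne_zero
    have hπ : (Real.pi:ℝ) ≠ 0 := Real.pi_ne_zero
    rw [pow_add, mul_pow, div_div, one_div, mul_inv]
    rw [div_eq_mul_inv, div_eq_mul_inv, mul_inv, mul_inv]
    ring
  have hS : ((∑' k : ℕ+, 1/((k:ℕ):ℝ)^(n+m) : ℝ) : ℂ) = riemannZeta ((n+m : ℕ) : ℂ) := by
    have hsupp : Function.support (fun j : ℕ => 1/(j:ℂ)^(n+m)) ⊆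
        Set.range (fun k : ℕ+ => (k:ℕ)) := by
      intro j hj
      have hj0 : j ≠ 0 := by
        rintro rfl
        simp [Function.mem_support, zero_pow (show n + m ≠ 0 by omega)] at hj
      exact ⟨⟨j, Nat.pos_of_ne_zero hj0⟩, rfl⟩
    calc ((∑' k : ℕ+, 1/((k:ℕ):ℝ)^(n+m) : ℝ) : ℂ)
        = ∑' k : ℕ+, ((1/((k:ℕ):ℝ)^(n+m) : ℝ) : ℂ) := Complex.ofReal_tsum _
      _ = ∑' k : ℕ+, 1/(((k:ℕ):ℂ))^(n+m) := by
          apply tsum_congr; intro k; push_cast; ring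
      _ = ∑' j : ℕ, 1/((j:ℂ))^(n+m) :=
          Function.Injective.tsum_eq PNat.coe_injective hsupp
      _ = riemannZeta ((n+m : ℕ) : ℂ) := (zeta_nat_eq_tsum_of_gt_one (by omega)).symm
  have hmain : (∫ x in (0:ℝ)..1, bernoulliPoly n x * clausenC m x)
      = (-(n.factorial : ℝ) * Real.cos (Real.pi*n/2) / (2*Real.pi)^n)
        * ∑' k : ℕ+, 1/((k:ℕ):ℝ)^(n+m) := by
    rw [show (∫ x in (0:ℝ)..1, bernoulliPoly n x * clausenC m x)
        = ∫ x in (0:ℝ)..1, ∑' k : ℕ+, F k x from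
      (intervalIntegral.integral_congr fun x _ => (hpt x).symm), ← hswap, ← tsum_mul_left]
    apply tsum_congr
    intro k
    rw [hval k]
  rw [hmain, Complex.ofReal_mul, hS]
  push_cast
  ring
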